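/- Let H be a complex Hilbert space, S a finite index set, (P_g)_{g∈S} orthogonal projections on H, and (α_g)_{g∈S} positive reals with Σ_{g∈S} α_g P_g = I. Suppose the family (P_g)_{g∈S} is irreducible, i.e., the only closed subspaces of H invariant under every P_g are {0} and H. If α_h = 1 for some h ∈ S, then P_h = 0 or P_h = I. -/

import Mathlib

open scoped ComplexInnerProductSpace in
/-- If `(P g)` is an irreducible family of orthogonal projections with
`∑ α g • P g = I`, `α g > 0`, and `α h = 1` for some `h`, then `P h = 0` or `P h = I`. -/
theorem stmt_7 {H : Type*} [NormedAddCommGroup H] [InnerProductSpace ℂ H]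
    [CompleteSpace H]
    {S : Type*} [Fintype S] (P : S → H →L[ℂ] H)
    (hproj : ∀ g, IsSelfAdjoint (P g) ∧ P g ∘L P g = P g)
    (α : S → ℝ) (hα : ∀ g, 0 < α g)
    (horth : ∑ g, (α g : ℂ) • P g = 1)
    (hirr : ∀ K : Submodule ℂ H, IsClosed (K : Set H) →
      (∀ g, ∀ x ∈ K, P g x ∈ K) → K = ⊥ ∨ K = ⊤)
    (h : S) (hh : α h = 1) :
    P h = 0 ∨ P h = 1 := by
  classical
  set K : Submodule ℂ H := LinearMap.ker (((1 : H →L[ℂ] H) - P h : H →L[ℂ] H) : H →ₗ[ℂ] H) with hK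
  have hmem : ∀ x, x ∈ K ↔ P h x = x := by
    intro x
    rw [hK, LinearMap.mem_ker]
    simp only [ContinuousLinearMap.coe_coe, ContinuousLinearMap.coe_sub', Pi.sub_apply, ContinuousLinearMap.one_apply]
    rw [sub_eq_zero]
    exact eq_comm
  -- Key: if P h x = x then P g x = 0 for g ≠ h
  have key : ∀ x, P h x = x → ∀ g, g ≠ h → P g x = 0 := by
    intro x hx g hg
    have hsum : ∑ g, (α g : ℂ) • P g x = x := by
      have := congrArg (fun T : H →L[ℂ] H => T x) horth
      simpa using this
    have hrest : ∑ g ∈ Finset.univ.erase h, (α g : ℂ) • P g x = 0 := by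
      have h1 : (∑ g ∈ Finset.univ.erase h, (α g : ℂ) • P g x) + (α h : ℂ) • P h x
          = ∑ g, (α g : ℂ) • P g x :=
        Finset.sum_erase_add _ _ (Finset.mem_univ h)
      rw [hsum, hx, hh] at h1
      simpa using h1
    have hinner : ∑ g ∈ Finset.univ.erase h, (α g : ℂ) * ⟪x, P g x⟫ = 0 := by
      have := congrArg (fun y => ⟪x, y⟫) hrest
      simp only [inner_sum, inner_smul_right, inner_zero_right] at this
      exact this
    have hnorm : ∀ g, ⟪x, P g x⟫ = (‖P g x‖ ^ 2 : ℝ) := by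
      intro g
      have hsym := (hproj g).1.isSymmetric
      have h2 : P g (P g x) = P g x := by
        have := congrArg (fun T : H →L[ℂ] H => T x) (hproj g).2
        simpa using this
      calc ⟪x, P g x⟫ = ⟪x, P g (P g x)⟫ := by rw [h2]
        _ = ⟪P g x, P g x⟫ := (hsym x (P g x)).symm
        _ = (‖P g x‖ ^ 2 : ℝ) := by
            rw [inner_self_eq_norm_sq_to_K]
            norm_num
    have hreal : ∑ g ∈ Finset.univ.erase h, α g * ‖P g x‖ ^ 2 = 0 := by
      have h3 : ((∑ g ∈ Finset.univ.erase h, α g * ‖P g x‖ ^ 2 : ℝ) : ℂ) = 0 := by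
        push_cast
        rw [← hinner]
        exact Finset.sum_congr rfl fun g _ => by rw [hnorm]; push_cast; ring
      exact_mod_cast h3
    have hzero : α g * ‖P g x‖ ^ 2 = 0 := by
      have hnonneg : ∀ i ∈ Finset.univ.erase h, 0 ≤ α i * ‖P i x‖ ^ 2 := by
        intro i _
        exact mul_nonneg (hα i).le (by positivity)
      exact (Finset.sum_eq_zero_iff_of_nonneg hnonneg).1 hreal g
        (Finset.mem_erase.2 ⟨hg, Finset.mem_univ g⟩)
    have : ‖P g x‖ ^ 2 = 0 := by
      rcases mul_eq_zero.1 hzero with h' | h'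
      · exact absurd h' (ne_of_gt (hα g))
      · exact h'
    simpa [pow_eq_zero_iff] using this
  have hclosed : IsClosed (K : Set H) := ContinuousLinearMap.isClosed_ker _
  have hinv : ∀ g, ∀ x ∈ K, P g x ∈ K := by
    intro g x hxK
    have hx := (hmem x).1 hxK
    by_cases hg : g = h
    · subst hg; rw [hx]; exact hxK
    · rw [key x hx g hg]; exact K.zero_mem
  rcases hirr K hclosed hinv with hbot | htop
  · left
    ext x
    have hPPx : P h (P h x) = P h x := by
      have := congrArg (fun T : H →L[ℂ] H => T x) (hproj h).2
      simpa using this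
    have : P h x ∈ K := (hmem _).2 hPPx
    rw [hbot] at this
    simpa using this
  · right
    ext x
    have : x ∈ K := htop ▸ Submodule.mem_top
    simpa using (hmem x).1 this
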